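/- The differential entropy of a Gaussian mixture Q = Σ_j w_j N(μ_j, σ_j²) is upper bounded by the entropy of the single Gaussian P with the same mean and variance as Q, plus the correction term (1/2)[log(E_w[σ_j²] + Var_w[μ_j]) − E_w[log σ_j²]]; equivalently, H(P) − H(Q) ≤ (1/2)[log(Σ_j w_j σ_j² + Σ_j w_j μ_j² − (Σ_j w_j μ_j)²) − Σ_j w_j log σ_j²]. -/

import Mathlib

open Finset MeasureTheory Real

lemma integrable_sq_mul_exp {b : ℝ} (hb : 0 < b) :
    Integrable (fun x : ℝ => x ^ 2 * Real.exp (-b * x ^ 2)) := by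
  have h := integrable_rpow_mul_exp_neg_mul_sq hb (s := 2) (by norm_num)
  have h2 : ∀ x : ℝ, x ^ (2 : ℝ) = x ^ (2 : ℕ) := fun x => by
    rw [show (2 : ℝ) = ((2 : ℕ) : ℝ) by norm_num, Real.rpow_natCast]
  simpa [h2] using h

lemma integral_sq_exp {b : ℝ} (hb : 0 < b) :
    ∫ x : ℝ, x ^ 2 * Real.exp (-b * x ^ 2) = (2 * b)⁻¹ * Real.sqrt (π / b) := by
  have hb' : (b : ℝ) ≠ 0 := ne_of_gt hb
  have hderiv : ∀ x : ℝ, HasDerivAt (fun y : ℝ => -(2 * b)⁻¹ * Real.exp (-b * y ^ 2))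
      (x * Real.exp (-b * x ^ 2)) x := by
    intro x
    have h1 : HasDerivAt (fun y : ℝ => -b * y ^ 2) (-b * (2 * x)) x := by
      simpa using ((hasDerivAt_pow 2 x).const_mul (-b))
    have h2 := (h1.exp).const_mul (-(2 * b)⁻¹)
    refine h2.congr_deriv ?_
    field_simp
  have hid : ∀ x : ℝ, HasDerivAt (fun y : ℝ => y) (1 : ℝ) x := fun x => hasDerivAt_id x
  have huv' : Integrable ((fun x : ℝ => x) * fun x => x * Real.exp (-b * x ^ 2)) := by
    simpa [Pi.mul_def, pow_two, mul_assoc] using integrable_sq_mul_exp hb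
  have hu'v : Integrable ((fun _ : ℝ => (1 : ℝ)) *
      fun x => -(2 * b)⁻¹ * Real.exp (-b * x ^ 2)) := by
    simpa [Pi.mul_def] using (integrable_exp_neg_mul_sq hb).const_mul (-(2 * b)⁻¹)
  have huv : Integrable ((fun x : ℝ => x) *
      fun x => -(2 * b)⁻¹ * Real.exp (-b * x ^ 2)) := by
    have := (integrable_mul_exp_neg_mul_sq hb).const_mul (-(2 * b)⁻¹)
    simpa [Pi.mul_def, mul_comm, mul_left_comm] using this
  have hibp := integral_mul_deriv_eq_deriv_mul_of_integrable (fun x _ => hid x) (fun x _ => hderiv x) huv' hu'v huv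
  have : ∫ x : ℝ, x ^ 2 * Real.exp (-b * x ^ 2)
      = ∫ x : ℝ, x * (x * Real.exp (-b * x ^ 2)) := by
    congr 1; funext x; ring
  rw [this, hibp]
  simp only [one_mul]
  rw [integral_const_mul, integral_gaussian]
  ring

noncomputable def gpdf (m s x : ℝ) : ℝ :=
  (Real.sqrt (2 * Real.pi * s))⁻¹ * Real.exp (-((x - m) ^ 2) / (2 * s))

lemma gpdf_pos (m : ℝ) {s : ℝ} (hs : 0 < s) (x : ℝ) : 0 < gpdf m s x := by
  have h2 : 0 < 2 * Real.pi * s := by positivity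
  exact mul_pos (inv_pos.2 (Real.sqrt_pos.2 h2)) (Real.exp_pos _)

lemma gpdf_eq (m : ℝ) {s : ℝ} (x : ℝ) :
    gpdf m s x = (Real.sqrt (2 * Real.pi * s))⁻¹ * Real.exp (-(2 * s)⁻¹ * (x - m) ^ 2) := by
  unfold gpdf
  congr 1
  congr 1
  ring

lemma sqrt_pi_div {s : ℝ} (hs : 0 < s) :
    Real.sqrt (π / (2 * s)⁻¹) = Real.sqrt (2 * Real.pi * s) := by
  congr 1
  field_simp

lemma integrable_gpdf (m : ℝ) {s : ℝ} (hs : 0 < s) : Integrable (gpdf m s) := by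
  have hb : (0 : ℝ) < (2 * s)⁻¹ := by positivity
  have h := ((integrable_exp_neg_mul_sq hb).comp_sub_right m).const_mul
    (Real.sqrt (2 * Real.pi * s))⁻¹
  have heq : gpdf m s = fun x => (Real.sqrt (2 * Real.pi * s))⁻¹ *
      ((fun y : ℝ => Real.exp (-(2 * s)⁻¹ * y ^ 2)) (x - m)) := by
    funext x; rw [gpdf_eq]
  rw [heq]; exact h

lemma integral_gpdf (m : ℝ) {s : ℝ} (hs : 0 < s) : ∫ x, gpdf m s x = 1 := by
  have hb : (0 : ℝ) < (2 * s)⁻¹ := by positivity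
  have h2 : 0 < 2 * Real.pi * s := by positivity
  simp only [gpdf_eq, integral_const_mul]
  rw [show (fun x : ℝ => Real.exp (-(2 * s)⁻¹ * (x - m) ^ 2))
      = fun x : ℝ => (fun y : ℝ => Real.exp (-(2 * s)⁻¹ * y ^ 2)) (x - m) from rfl]
  rw [integral_sub_right_eq_self (fun y : ℝ => Real.exp (-(2 * s)⁻¹ * y ^ 2)) m]
  rw [integral_gaussian, sqrt_pi_div hs]
  exact inv_mul_cancel₀ (ne_of_gt (Real.sqrt_pos.2 h2))

lemma integrable_gpdf_sq (m : ℝ) {s : ℝ} (hs : 0 < s) :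
    Integrable (fun x => gpdf m s x * (x - m) ^ 2) := by
  have hb : (0 : ℝ) < (2 * s)⁻¹ := by positivity
  have h := ((integrable_sq_mul_exp hb).comp_sub_right m).const_mul
    (Real.sqrt (2 * Real.pi * s))⁻¹
  have : (fun x => gpdf m s x * (x - m) ^ 2)
      = fun x => (Real.sqrt (2 * Real.pi * s))⁻¹ *
        ((x - m) ^ 2 * Real.exp (-(2 * s)⁻¹ * (x - m) ^ 2)) := by
    funext x; rw [gpdf_eq]; ring
  rw [this]; exact h

lemma integrable_gpdf_lin (m : ℝ) {s : ℝ} (hs : 0 < s) :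
    Integrable (fun x => gpdf m s x * (x - m)) := by
  have hb : (0 : ℝ) < (2 * s)⁻¹ := by positivity
  have h := ((integrable_mul_exp_neg_mul_sq hb).comp_sub_right m).const_mul
    (Real.sqrt (2 * Real.pi * s))⁻¹
  have : (fun x => gpdf m s x * (x - m))
      = fun x => (Real.sqrt (2 * Real.pi * s))⁻¹ *
        ((x - m) * Real.exp (-(2 * s)⁻¹ * (x - m) ^ 2)) := by
    funext x; rw [gpdf_eq]; ring
  rw [this]; exact h

lemma integral_gpdf_sq (m : ℝ) {s : ℝ} (hs : 0 < s) :
    ∫ x, gpdf m s x * (x - m) ^ 2 = s := by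
  have hb : (0 : ℝ) < (2 * s)⁻¹ := by positivity
  have h2 : 0 < 2 * Real.pi * s := by positivity
  have : (fun x => gpdf m s x * (x - m) ^ 2)
      = fun x => (Real.sqrt (2 * Real.pi * s))⁻¹ *
        ((fun y => y ^ 2 * Real.exp (-(2 * s)⁻¹ * y ^ 2)) (x - m)) := by
    funext x; rw [gpdf_eq]; ring
  rw [this, integral_const_mul,
    integral_sub_right_eq_self (fun y : ℝ => y ^ 2 * Real.exp (-(2 * s)⁻¹ * y ^ 2)) m,
    integral_sq_exp hb, sqrt_pi_div hs]
  have h3 : (2 * (2 * s)⁻¹)⁻¹ = s := by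
    rw [mul_inv, inv_inv]; ring
  have hne : Real.sqrt (2 * Real.pi * s) ≠ 0 := ne_of_gt (Real.sqrt_pos.2 h2)
  rw [h3, mul_comm s _, ← mul_assoc, inv_mul_cancel₀ hne, one_mul]

lemma log_gpdf (m : ℝ) {s : ℝ} (hs : 0 < s) (x : ℝ) :
    Real.log (gpdf m s x) = -(1 / 2) * Real.log (2 * Real.pi * s) - (x - m) ^ 2 / (2 * s) := by
  have h2 : 0 < 2 * Real.pi * s := by positivity
  unfold gpdf
  rw [Real.log_mul (by positivity) (ne_of_gt (Real.exp_pos _)), Real.log_exp,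
    Real.log_inv, Real.log_sqrt (le_of_lt h2)]
  ring

lemma neg_mul_log_gpdf (m : ℝ) {s : ℝ} (hs : 0 < s) :
    (fun x => -(gpdf m s x * Real.log (gpdf m s x)))
      = fun x => (1 / 2) * Real.log (2 * Real.pi * s) * gpdf m s x
        + (2 * s)⁻¹ * (gpdf m s x * (x - m) ^ 2) := by
  funext x
  rw [log_gpdf m hs x]
  field_simp
  ring

lemma integrable_negMulLog_gpdf (m : ℝ) {s : ℝ} (hs : 0 < s) :
    Integrable (fun x => -(gpdf m s x * Real.log (gpdf m s x))) := by
  rw [neg_mul_log_gpdf m hs]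
  exact ((integrable_gpdf m hs).const_mul _).add ((integrable_gpdf_sq m hs).const_mul _)

lemma integral_negMulLog_gpdf (m : ℝ) {s : ℝ} (hs : 0 < s) :
    ∫ x, -(gpdf m s x * Real.log (gpdf m s x)) = (Real.log (2 * Real.pi * s) + 1) / 2 := by
  rw [neg_mul_log_gpdf m hs]
  rw [integral_add (((integrable_gpdf m hs)).const_mul _) ((integrable_gpdf_sq m hs).const_mul _),
    integral_const_mul, integral_const_mul, integral_gpdf m hs, integral_gpdf_sq m hs]
  field_simp

lemma integrable_gpdf_sq' (m c : ℝ) {s : ℝ} (hs : 0 < s) :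
    Integrable (fun x => gpdf m s x * (x - c) ^ 2) := by
  have : (fun x => gpdf m s x * (x - c) ^ 2)
      = fun x => (gpdf m s x * (x - m) ^ 2) + ((2 * (m - c)) * (gpdf m s x * (x - m))
          + (m - c) ^ 2 * gpdf m s x) := by
    funext x; ring
  rw [this]
  exact (integrable_gpdf_sq m hs).add
    (((integrable_gpdf_lin m hs).const_mul _).add ((integrable_gpdf m hs).const_mul _))

lemma continuous_gpdf (m s : ℝ) : Continuous (gpdf m s) := by
  unfold gpdf
  fun_prop

theorem gmm_main {C : ℕ} (w μ σ2 : Fin C → ℝ)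
    (hw : ∀ i, 0 ≤ w i) (hσ : ∀ i, 0 < σ2 i) (hsum : ∑ i, w i = 1) :
    (∫ x, -(gpdf (∑ i, w i * μ i) (∑ i, w i * ((μ i) ^ 2 + σ2 i) - (∑ i, w i * μ i) ^ 2) x *
        Real.log (gpdf (∑ i, w i * μ i)
          (∑ i, w i * ((μ i) ^ 2 + σ2 i) - (∑ i, w i * μ i) ^ 2) x)))
      - (∫ x, -((∑ i, w i * gpdf (μ i) (σ2 i) x) *
          Real.log (∑ i, w i * gpdf (μ i) (σ2 i) x)))
      ≤ (1 / 2) * (Real.log (∑ i, w i * σ2 i +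
          (∑ i, w i * (μ i) ^ 2 - (∑ i, w i * μ i) ^ 2))
        - ∑ i, w i * Real.log (σ2 i)) := by
  set mbar := ∑ i, w i * μ i with hmbar
  set s2bar := ∑ i, w i * ((μ i) ^ 2 + σ2 i) - mbar ^ 2 with hs2bar_def
  set Q : ℝ → ℝ := fun x => ∑ i, w i * gpdf (μ i) (σ2 i) x with hQ
  -- split s2bar
  have hsplit : ∑ i, w i * ((μ i) ^ 2 + σ2 i) = ∑ i, w i * (μ i) ^ 2 + ∑ i, w i * σ2 i := by
    rw [← Finset.sum_add_distrib]; congr 1; funext i; ring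
  -- a positive weight exists
  obtain ⟨j0, -, hj0ne⟩ : ∃ i ∈ Finset.univ, w i ≠ 0 := by
    apply Finset.exists_ne_zero_of_sum_ne_zero
    rw [hsum]; norm_num
  have hj0 : 0 < w j0 := lt_of_le_of_ne (hw j0) (Ne.symm hj0ne)
  -- positivity of variance pieces
  have hA : 0 < ∑ i, w i * σ2 i := by
    have h1 : w j0 * σ2 j0 ≤ ∑ i, w i * σ2 i :=
      Finset.single_le_sum (fun i _ => mul_nonneg (hw i) (le_of_lt (hσ i)))
        (Finset.mem_univ j0)
    exact lt_of_lt_of_le (mul_pos hj0 (hσ j0)) h1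
  have hB : mbar ^ 2 ≤ ∑ i, w i * (μ i) ^ 2 := by
    have hcs := Finset.sum_mul_sq_le_sq_mul_sq Finset.univ
      (fun i => Real.sqrt (w i)) (fun i => Real.sqrt (w i) * μ i)
    have e1 : ∀ i, Real.sqrt (w i) * (Real.sqrt (w i) * μ i) = w i * μ i := by
      intro i; rw [← mul_assoc, Real.mul_self_sqrt (hw i)]
    have e2 : ∀ i, Real.sqrt (w i) ^ 2 = w i := fun i => Real.sq_sqrt (hw i)
    have e3 : ∀ i, (Real.sqrt (w i) * μ i) ^ 2 = w i * (μ i) ^ 2 := by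
      intro i; rw [mul_pow, e2]
    simp only [e1, e2, e3] at hcs
    rw [hsum, one_mul] at hcs
    exact hcs
  have hs2bar : 0 < s2bar := by
    rw [hs2bar_def, hsplit]; linarith
  -- pointwise positivity of the mixture
  have hQpos : ∀ x, 0 < Q x := by
    intro x
    have h1 : w j0 * gpdf (μ j0) (σ2 j0) x ≤ Q x :=
      Finset.single_le_sum
        (fun i _ => mul_nonneg (hw i) (le_of_lt (gpdf_pos _ (hσ i) x))) (Finset.mem_univ j0)
    exact lt_of_lt_of_le (mul_pos hj0 (gpdf_pos _ (hσ j0) x)) h1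
  -- lower bound function
  set L : ℝ → ℝ := fun x => ∑ i, w i * -(gpdf (μ i) (σ2 i) x * Real.log (gpdf (μ i) (σ2 i) x))
    with hL
  have hLint : Integrable L :=
    integrable_finset_sum _ (fun i _ => (integrable_negMulLog_gpdf (μ i) (hσ i)).const_mul _)
  -- pointwise Jensen: L x ≤ negMulLog (Q x)
  have hjensen : ∀ x, L x ≤ -(Q x * Real.log (Q x)) := by
    intro x
    have h := Real.concaveOn_negMulLog.le_map_sum (t := Finset.univ) (w := w)
      (p := fun i => gpdf (μ i) (σ2 i) x) (fun i _ => hw i) hsum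
      (fun i _ => Set.mem_Ici.2 (le_of_lt (gpdf_pos _ (hσ i) x)))
    simp only [smul_eq_mul, Real.negMulLog, neg_mul] at h
    exact h
  -- upper bound function
  set A : ℝ := -Real.log (w j0) + (1 / 2) * Real.log (2 * Real.pi * σ2 j0) with hA_def
  set U : ℝ → ℝ := fun x => Q x * (A + (x - μ j0) ^ 2 / (2 * σ2 j0)) with hU
  have hupper : ∀ x, -(Q x * Real.log (Q x)) ≤ U x := by
    intro x
    have hlogle : Real.log (w j0 * gpdf (μ j0) (σ2 j0) x) ≤ Real.log (Q x) :=
      Real.log_le_log (mul_pos hj0 (gpdf_pos _ (hσ j0) x))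
        (Finset.single_le_sum
          (fun i _ => mul_nonneg (hw i) (le_of_lt (gpdf_pos _ (hσ i) x)))
          (Finset.mem_univ j0))
    have hlogeq : Real.log (w j0 * gpdf (μ j0) (σ2 j0) x)
        = Real.log (w j0) + (-(1 / 2) * Real.log (2 * Real.pi * σ2 j0)
            - (x - μ j0) ^ 2 / (2 * σ2 j0)) := by
      rw [Real.log_mul (ne_of_gt hj0) (ne_of_gt (gpdf_pos _ (hσ j0) x)),
        log_gpdf _ (hσ j0) x]
    have h1 : -Real.log (Q x) ≤ A + (x - μ j0) ^ 2 / (2 * σ2 j0) := by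
      rw [hA_def]; rw [hlogeq] at hlogle; linarith
    have h2 : -(Q x * Real.log (Q x)) = Q x * (-Real.log (Q x)) := by ring
    rw [h2, hU]
    exact mul_le_mul_of_nonneg_left h1 (le_of_lt (hQpos x))
  have hUint : Integrable U := by
    have : U = fun x => ∑ i, ((w i * A) * gpdf (μ i) (σ2 i) x
        + (w i * (2 * σ2 j0)⁻¹) * (gpdf (μ i) (σ2 i) x * (x - μ j0) ^ 2)) := by
      funext x
      rw [hU, hQ]
      simp only [Finset.sum_mul]
      refine Finset.sum_congr rfl (fun i _ => ?_)
      ring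
    rw [this]
    apply integrable_finset_sum
    intro i _
    exact ((integrable_gpdf (μ i) (hσ i)).const_mul _).add
      ((integrable_gpdf_sq' (μ i) (μ j0) (hσ i)).const_mul _)
  -- integrability of the mixture entropy integrand
  have hQcont : Continuous Q := by
    rw [hQ]
    exact continuous_finset_sum _ (fun i _ => continuous_const.mul (continuous_gpdf (μ i) (σ2 i)))
  have hfint : Integrable (fun x => -(Q x * Real.log (Q x))) := by
    refine Integrable.mono' (hLint.abs.add hUint.abs)
      (((hQcont.measurable.mul
        (Real.measurable_log.comp hQcont.measurable)).neg).aestronglyMeasurable)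
      (Filter.Eventually.of_forall (fun x => ?_))
    have h1 := hjensen x
    have h2 := hupper x
    have h3 := le_abs_self (U x)
    have h4 := neg_abs_le (L x)
    have h5 := abs_nonneg (L x)
    have h6 := abs_nonneg (U x)
    rw [Real.norm_eq_abs, abs_le]
    constructor <;> simp only [Pi.add_apply, Pi.abs_apply] <;> linarith
  -- lower bound on mixture entropy
  have hHQ : ∑ i, w i * ((Real.log (2 * Real.pi * σ2 i) + 1) / 2)
      ≤ ∫ x, -(Q x * Real.log (Q x)) := by
    have h := integral_mono hLint hfint hjensen
    rw [hL] at h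
    rw [integral_finset_sum _
      (fun i _ => (integrable_negMulLog_gpdf (μ i) (hσ i)).const_mul _)] at h
    refine le_trans (le_of_eq ?_) h
    apply Finset.sum_congr rfl
    intro i _
    rw [integral_const_mul, integral_negMulLog_gpdf (μ i) (hσ i)]
  -- value of the matched Gaussian entropy
  have hHP : ∫ x, -(gpdf mbar s2bar x * Real.log (gpdf mbar s2bar x))
      = (Real.log (2 * Real.pi * s2bar) + 1) / 2 := integral_negMulLog_gpdf mbar hs2bar
  -- final arithmetic
  have hgoalarg : ∑ i, w i * σ2 i + (∑ i, w i * (μ i) ^ 2 - mbar ^ 2) = s2bar := by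
    rw [hs2bar_def, hsplit]; ring
  have hlog1 : Real.log (2 * Real.pi * s2bar)
      = Real.log (2 * Real.pi) + Real.log s2bar := by
    rw [Real.log_mul (by positivity) (ne_of_gt hs2bar)]
  have hsum2 : ∑ i, w i * ((Real.log (2 * Real.pi * σ2 i) + 1) / 2)
      = (Real.log (2 * Real.pi) + 1) / 2
        + (1 / 2) * ∑ i, w i * Real.log (σ2 i) := by
    have hterm : ∀ i, w i * ((Real.log (2 * Real.pi * σ2 i) + 1) / 2)
        = w i * ((Real.log (2 * Real.pi) + 1) / 2)
          + (1 / 2) * (w i * Real.log (σ2 i)) := by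
      intro i
      rw [Real.log_mul (by positivity) (ne_of_gt (hσ i))]
      ring
    rw [Finset.sum_congr rfl (fun i _ => hterm i), Finset.sum_add_distrib,
      ← Finset.sum_mul, ← Finset.mul_sum, hsum, one_mul]
  rw [hHP, hgoalarg]
  linarith [hHQ, hsum2, hlog1]

/-- Entropy upper bound for the moment-matched Gaussian vs. a Gaussian mixture:
H(P) − H(Q) ≤ (1/2)[log(E_w[σ_j²] + Var_w[μ_j]) − E_w[log σ_j²]]. -/
theorem gmm_entropy_lower_bound {C : ℕ} (w μ σ2 : Fin C → ℝ)
    (hw : ∀ i, 0 ≤ w i) (hσ : ∀ i, 0 < σ2 i) (hsum : ∑ i, w i = 1) :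
    let gauss : ℝ → ℝ → ℝ → ℝ := fun m s2 x =>
      (Real.sqrt (2 * Real.pi * s2))⁻¹ * Real.exp (-((x - m) ^ 2) / (2 * s2))
    let Q : ℝ → ℝ := fun x => ∑ i, w i * gauss (μ i) (σ2 i) x
    let mbar : ℝ := ∑ i, w i * μ i
    let s2bar : ℝ := ∑ i, w i * ((μ i) ^ 2 + σ2 i) - mbar ^ 2
    let P : ℝ → ℝ := gauss mbar s2bar
    let H : (ℝ → ℝ) → ℝ := fun p => ∫ x, -(p x * Real.log (p x))
    H P - H Q ≤ (1 / 2) *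
      (Real.log (∑ i, w i * σ2 i + (∑ i, w i * (μ i) ^ 2 - mbar ^ 2))
        - ∑ i, w i * Real.log (σ2 i)) := by
  intro gauss Q mbar s2bar P H
  exact gmm_main w μ σ2 hw hσ hsum
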